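/- For every positive integer k, the star-critical Gallai-Ramsey number gr_k^*(K_3 : P_4) equals k. That is: (1) every k-edge-coloring of the graph obtained from K_{k+2} by adding a new vertex joined to k vertices contains a rainbow triangle or a monochromatic P_4 whenever the K_{k+2} itself contains neither; and (2) there exists a k-edge-coloring of K_{k+2} plus a new vertex joined to k-1 vertices with no rainbow triangle and no monochromatic P_4. -/

import Mathlib

def RainbowTri {V : Type} {k : ℕ} (Adj : V → V → Prop) (c : V → V → Fin k) : Prop :=
  ∃ a b d : V, Adj a b ∧ Adj a d ∧ Adj b d ∧
    c a b ≠ c a d ∧ c a b ≠ c b d ∧ c a d ≠ c b d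

def MonoTri {V : Type} {k : ℕ} (Adj : V → V → Prop) (c : V → V → Fin k) : Prop :=
  ∃ a b d : V, a ≠ b ∧ a ≠ d ∧ b ≠ d ∧ Adj a b ∧ Adj a d ∧ Adj b d ∧
    c a b = c a d ∧ c a d = c b d

def MonoP4 {V : Type} {k : ℕ} (Adj : V → V → Prop) (c : V → V → Fin k) : Prop :=
  ∃ a b d e : V, a ≠ b ∧ a ≠ d ∧ a ≠ e ∧ b ≠ d ∧ b ≠ e ∧ d ≠ e ∧
    Adj a b ∧ Adj b d ∧ Adj d e ∧ c a b = c b d ∧ c b d = c d e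

def MonoC4 {V : Type} {k : ℕ} (Adj : V → V → Prop) (c : V → V → Fin k) : Prop :=
  ∃ a b d e : V, a ≠ b ∧ a ≠ d ∧ a ≠ e ∧ b ≠ d ∧ b ≠ e ∧ d ≠ e ∧
    Adj a b ∧ Adj b d ∧ Adj d e ∧ Adj e a ∧
    c a b = c b d ∧ c b d = c d e ∧ c d e = c e a

def MonoClique {V : Type} {k : ℕ} [DecidableEq V] (Adj : V → V → Prop)
    (c : V → V → Fin k) (p : ℕ) (i : Fin k) : Prop :=
  ∃ S : Finset V, S.card = p ∧ ∀ a ∈ S, ∀ b ∈ S, a ≠ b → Adj a b ∧ c a b = i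

def MonoStar {V : Type} {k : ℕ} [DecidableEq V] (Adj : V → V → Prop)
    (c : V → V → Fin k) (m : ℕ) (i : Fin k) : Prop :=
  ∃ v : V, ∃ S : Finset V, S.card = m ∧ v ∉ S ∧ ∀ u ∈ S, Adj v u ∧ c v u = i

def Full {V : Type} : V → V → Prop := fun a b => a ≠ b

def OAdj {m : ℕ} (A : Finset (Fin m)) : Option (Fin m) → Option (Fin m) → Prop
  | some i, some j => i ≠ j
  | some i, none   => i ∈ A
  | none,   some j => j ∈ A
  | none,   none   => False

def IsGallaiPartition {n k q : ℕ} (c : Fin n → Fin n → Fin k)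
    (P : Fin q → Finset (Fin n)) : Prop :=
  2 ≤ q ∧ (∀ i, (P i).Nonempty) ∧ (∀ i j, i ≠ j → Disjoint (P i) (P j)) ∧
  (∀ x : Fin n, ∃ i, x ∈ P i) ∧
  (∀ i j, i ≠ j → ∃ col : Fin k, ∀ a ∈ P i, ∀ b ∈ P j, c a b = col) ∧
  (∃ c1 c2 : Fin k, ∀ i j, i ≠ j → ∀ a ∈ P i, ∀ b ∈ P j, c a b = c1 ∨ c a b = c2)

def MonoCopy {W V : Type} {k : ℕ} (H : SimpleGraph W) (Adj : V → V → Prop)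
    (c : V → V → Fin k) (i : Fin k) : Prop :=
  ∃ φ : W → V, Function.Injective φ ∧
    ∀ a b, H.Adj a b → Adj (φ a) (φ b) ∧ c (φ a) (φ b) = i

def MonoMergeCopy {W V : Type} {k : ℕ} (H : SimpleGraph W)
    (c : V → V → Fin k) (i : Fin k) : Prop :=
  ∃ φ : W → V, ∀ a b, H.Adj a b → φ a ≠ φ b ∧ c (φ a) (φ b) = i

set_option maxHeartbeats 1000000 in
lemma star_struct (k : ℕ) (hk : 2 ≤ k) (c : Fin (k+2) → Fin (k+2) → Fin k)
    (hsymm : ∀ a b, c a b = c b a)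
    (hR : ¬ RainbowTri Full c) (hP : ¬ MonoP4 Full c) :
    ∃ v i, (∀ u, u ≠ v → c v u = i) ∧
      (∀ a b, a ≠ v → b ≠ v → a ≠ b → c a b ≠ i) := by
  classical
  set D : Fin (k+2) × Fin k → ℕ :=
    fun p => (Finset.univ.filter (fun u => u ≠ p.1 ∧ c p.1 u = p.2)).card with hD
  obtain ⟨p, -, hmax⟩ := Finset.exists_max_image Finset.univ D ⟨((0 : Fin (k+2)), c 0 1), Finset.mem_univ _⟩
  obtain ⟨v, i⟩ := p
  -- pigeonhole : D has value ≥ 2 somewhere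
  have hpig : 2 ≤ D (v, i) := by
    have hlt : (Finset.univ : Finset (Fin k)).card <
        ((Finset.univ : Finset (Fin (k+2))).erase 0).card := by
      rw [Finset.card_erase_of_mem (Finset.mem_univ _)]
      simp only [Finset.card_univ, Fintype.card_fin]
      omega
    obtain ⟨x, hx, y, hy, hxy, hcxy⟩ :=
      Finset.exists_ne_map_eq_of_card_lt_of_maps_to hlt
        (f := fun u => c 0 u) (fun a _ => Finset.mem_univ _)
    have hx0 : x ≠ 0 := by simpa using hx
    have hy0 : y ≠ 0 := by simpa using hy
    have h2 : 2 ≤ D ((0 : Fin (k+2)), c 0 x) := by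
      have hsub : ({x, y} : Finset (Fin (k+2))) ⊆
          (Finset.univ.filter (fun u => u ≠ (0 : Fin (k+2)) ∧ c 0 u = c 0 x)) := by
        intro z hz
        simp only [Finset.mem_insert, Finset.mem_singleton] at hz
        simp only [Finset.mem_filter, Finset.mem_univ, true_and]
        rcases hz with rfl | rfl
        · exact ⟨hx0, rfl⟩
        · exact ⟨hy0, hcxy.symm⟩
      calc 2 = ({x, y} : Finset (Fin (k+2))).card := by
                rw [Finset.card_insert_of_notMem (by simpa using hxy), Finset.card_singleton]
        _ ≤ _ := Finset.card_le_card hsub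
    exact le_trans h2 (hmax _ (Finset.mem_univ _))
  set S : Finset (Fin (k+2)) := Finset.univ.filter (fun u => u ≠ v ∧ c v u = i) with hS
  have hpigS : 2 ≤ S.card := hpig
  have hstar : ∀ u, u ≠ v → c v u = i := by
    by_contra hcon
    push_neg at hcon
    obtain ⟨u, huv, hui⟩ := hcon
    have huS : u ∉ S := by simp [hS, hui]
    -- step 1 : no i-edges from u to S
    have step1 : ∀ a ∈ S, c u a ≠ i := by
      intro a ha hca
      obtain ⟨b, hb, hba⟩ := Finset.exists_mem_ne (by omega : 1 < S.card) a
      simp only [hS, Finset.mem_filter, Finset.mem_univ, true_and] at ha hb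
      refine hP ⟨u, a, v, b, ?_, huv, ?_, ha.1, Ne.symm hba, Ne.symm hb.1,
        ?_, ha.1, Ne.symm hb.1, ?_, ?_⟩
      · rintro rfl; exact hui ha.2
      · rintro rfl; exact hui hb.2
      · rintro rfl; exact hui ha.2
      · rw [hca, hsymm a v, ha.2]
      · rw [hsymm a v, ha.2, hb.2]
    -- step 2 : u sees S ∪ {v} in color c u v
    have step2 : ∀ a ∈ S, c u a = c u v := by
      intro a ha
      have ha' := ha
      simp only [hS, Finset.mem_filter, Finset.mem_univ, true_and] at ha'
      by_contra hne
      refine hR ⟨u, v, a, huv, ?_, Ne.symm ha'.1, fun h => hne h.symm, ?_, ?_⟩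
      · rintro rfl; exact huS ha
      · rw [ha'.2, hsymm u v]; exact hui
      · rw [ha'.2]; exact step1 a ha
    have hle : D (u, c u v) ≤ D (v, i) := hmax _ (Finset.mem_univ _)
    have hge : S.card + 1 ≤ D (u, c u v) := by
      have hsub : insert v S ⊆
          (Finset.univ.filter (fun w => w ≠ u ∧ c u w = c u v)) := by
        intro z hz
        simp only [Finset.mem_filter, Finset.mem_univ, true_and]
        rcases Finset.mem_insert.mp hz with rfl | hzS
        · exact ⟨Ne.symm huv, rfl⟩
        · refine ⟨fun h => huS (h ▸ hzS), step2 z hzS⟩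
      have hc := Finset.card_le_card hsub
      rw [Finset.card_insert_of_notMem (by simp [hS])] at hc
      exact hc
    have hSD : D (v, i) = S.card := rfl
    omega
  refine ⟨v, i, hstar, ?_⟩
  intro a b hav hbv hab hcab
  have hcard : ({v, a, b} : Finset (Fin (k+2))).card < Fintype.card (Fin (k+2)) := by
    have h3 : ({v, a, b} : Finset (Fin (k+2))).card ≤ 3 :=
      le_trans (Finset.card_insert_le _ _)
        (by have := Finset.card_insert_le a ({b} : Finset (Fin (k+2))); rw [Finset.card_singleton] at this; omega)
    simp only [Fintype.card_fin]
    omega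
  obtain ⟨x, hx⟩ : ∃ x, x ∉ ({v, a, b} : Finset (Fin (k+2))) := by
    by_contra hcon
    push_neg at hcon
    have hsub : (Finset.univ : Finset (Fin (k+2))) ⊆ {v, a, b} := fun z _ => hcon z
    have hc := Finset.card_le_card hsub
    simp only [Finset.card_univ] at hc
    omega
  simp only [Finset.mem_insert, Finset.mem_singleton, not_or] at hx
  obtain ⟨hxv, hxa, hxb⟩ := hx
  refine hP ⟨x, v, a, b, hxv, hxa, hxb, Ne.symm hav, Ne.symm hbv, hab,
    hxv, Ne.symm hav, hab, ?_, ?_⟩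
  · rw [hsymm x v, hstar x hxv, hstar a hav]
  · rw [hstar a hav, hcab]


def mval {n : ℕ} (o : Option (Fin n)) : ℕ := o.elim 0 Fin.val

@[simp] lemma mval_none {n : ℕ} : mval (none : Option (Fin n)) = 0 := rfl
@[simp] lemma mval_some {n : ℕ} (x : Fin n) : mval (some x) = x.val := rfl


set_option maxHeartbeats 1000000 in
/-- embedding of `Fin n` into `Fin (n+1)` avoiding `v` -/
def emb {n : ℕ} (v : Fin (n+1)) (x : Fin n) : Fin (n+1) :=
  if x.val < v.val then ⟨x.val, by have := x.isLt; omega⟩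
  else ⟨x.val + 1, by have := x.isLt; omega⟩

lemma emb_val {n : ℕ} (v : Fin (n+1)) (x : Fin n) :
    (emb v x).val = if x.val < v.val then x.val else x.val + 1 := by
  unfold emb; split <;> rfl

lemma emb_ne {n : ℕ} (v : Fin (n+1)) (x : Fin n) : emb v x ≠ v := by
  intro h
  have h2 : (emb v x).val = v.val := by rw [h]
  rw [emb_val] at h2
  have := x.isLt
  split at h2 <;> omega

lemma emb_inj {n : ℕ} (v : Fin (n+1)) : Function.Injective (emb v) := by
  intro x y h
  have h2 : (emb v x).val = (emb v y).val := by rw [h]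
  rw [emb_val, emb_val] at h2
  apply Fin.ext
  split at h2 <;> split at h2 <;> omega

lemma emb_surj {n : ℕ} (v : Fin (n+1)) (y : Fin (n+1)) (hy : y ≠ v) :
    ∃ x, emb v x = y := by
  have hyv : y.val ≠ v.val := fun h => hy (Fin.ext h)
  have hv := v.isLt
  have hyl := y.isLt
  by_cases h : y.val < v.val
  · refine ⟨⟨y.val, by omega⟩, Fin.ext ?_⟩
    rw [emb_val]
    simp only [Fin.val_mk]
    split <;> omega
  · refine ⟨⟨y.val - 1, by omega⟩, Fin.ext ?_⟩
    rw [emb_val]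
    simp only [Fin.val_mk]
    split <;> omega

/-- color relabeling dropping color `i` -/
def rho {n : ℕ} (i : Fin (n+2)) (j : Fin (n+2)) : Fin (n+1) :=
  if h : j.val < i.val then ⟨j.val, by have := i.isLt; omega⟩
  else ⟨j.val - 1, by have := j.isLt; omega⟩

lemma rho_val {n : ℕ} (i : Fin (n+2)) (j : Fin (n+2)) :
    (rho i j).val = if j.val < i.val then j.val else j.val - 1 := by
  unfold rho; split <;> rfl

lemma rho_inj {n : ℕ} (i : Fin (n+2)) (j j' : Fin (n+2)) (hj : j ≠ i) (hj' : j' ≠ i)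
    (h : rho i j = rho i j') : j = j' := by
  have h1 : j.val ≠ i.val := fun hh => hj (Fin.ext hh)
  have h2 : j'.val ≠ i.val := fun hh => hj' (Fin.ext hh)
  have h3 : (rho i j).val = (rho i j').val := by rw [h]
  rw [rho_val, rho_val] at h3
  apply Fin.ext
  split at h3 <;> split at h3 <;> omega

lemma extAux : ∀ m : ℕ, ∀ A : Finset (Fin (m+1+2)), A.card = m+1 →
    ∀ g : Option (Fin (m+1+2)) → Option (Fin (m+1+2)) → Fin (m+1),
    (∀ a b, g a b = g b a) →
    ¬ RainbowTri Full (fun a b => g (some a) (some b)) →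
    ¬ MonoP4 Full (fun a b => g (some a) (some b)) →
    RainbowTri (OAdj A) g ∨ MonoP4 (OAdj A) g := by
  intro m
  induction m with
  | zero =>
    intro A hA g hsymm hR hP
    obtain ⟨a, ha⟩ := Finset.card_pos.mp (by omega : 0 < A.card)
    have h3 : ∀ a : Fin 3, ∃ b c : Fin 3, a ≠ b ∧ a ≠ c ∧ b ≠ c := by decide
    obtain ⟨b, c, hab, hac, hbc⟩ := h3 a
    right
    refine ⟨none, some a, some b, some c, by simp, by simp, by simp,
      by simpa using hab, by simpa using hac, by simpa using hbc,
      ha, hab, hbc, Fin.ext (by omega), Fin.ext (by omega)⟩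
  | succ n IH =>
    intro A hA g hsymm hR hP
    obtain ⟨v, i, hstar, hpriv⟩ := star_struct (n+2) (by omega)
      (fun a b => g (some a) (some b)) (fun a b => hsymm _ _) hR hP
    by_cases hex : ∃ u, u ∈ A ∧ u ≠ v ∧ g (some u) none = i
    · obtain ⟨u, huA, huv, hgi⟩ := hex
      obtain ⟨x, hxv, hxu⟩ : ∃ x : Fin (n+1+1+2), x ≠ v ∧ x ≠ u := by
        by_contra hcon
        push_neg at hcon
        have hsub : (Finset.univ : Finset (Fin (n+1+1+2))) ⊆ {v, u} := by
          intro z _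
          simp only [Finset.mem_insert, Finset.mem_singleton]
          by_cases h : z = v
          · exact Or.inl h
          · exact Or.inr (hcon z h)
        have hc := Finset.card_le_card hsub
        simp only [Finset.card_univ, Fintype.card_fin] at hc
        have := Finset.card_insert_le v ({u} : Finset (Fin (n+1+1+2)))
        simp at this
        omega
      right
      refine ⟨some x, some v, some u, none, by simpa using hxv, by simpa using hxu,
        by simp, by simpa using (Ne.symm huv : v ≠ u), by simp, by simp,
        hxv, (Ne.symm huv : v ≠ u), huA, ?_, ?_⟩
      · show g (some x) (some v) = g (some v) (some u)
        rw [hsymm (some x) (some v)]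
        rw [show g (some v) (some x) = i from hstar x hxv,
            show g (some v) (some u) = i from hstar u huv]
      · show g (some v) (some u) = g (some u) none
        rw [show g (some v) (some u) = i from hstar u huv, hgi]
    · push_neg at hex
      -- pendant edges to A ∖ {v} avoid color i
      have hpend : ∀ u, u ∈ A → u ≠ v → g (some u) none ≠ i := hex
      obtain ⟨B, hBsub, hBcard⟩ := Finset.exists_subset_card_eq
        (show n+1 ≤ (A.erase v).card from by
          have := Finset.pred_card_le_card_erase (s := A) (a := v)
          omega)
      set A' : Finset (Fin (n+1+2)) := Finset.univ.filter (fun x => emb v x ∈ B) with hA'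
      have hA'card : A'.card = n+1 := by
        refine Eq.trans (Finset.card_bij (fun x _ => emb v x) ?_ ?_ ?_) hBcard
        · intro x hx
          simp only [hA', Finset.mem_filter] at hx
          exact hx.2
        · intro x _ y _ h
          exact emb_inj v h
        · intro b hb
          have hbv : b ≠ v := Finset.ne_of_mem_erase (hBsub hb)
          obtain ⟨x, hx⟩ := emb_surj v b hbv
          exact ⟨x, by simp [hA', hx, hb], hx⟩
      set Φ : Option (Fin (n+1+2)) → Option (Fin (n+1+1+2)) := Option.map (emb v) with hΦ
      set g' : Option (Fin (n+1+2)) → Option (Fin (n+1+2)) → Fin (n+1) :=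
        fun a b => rho i (g (Φ a) (Φ b)) with hg'
      have hadj : ∀ x y, OAdj A' x y → OAdj A (Φ x) (Φ y) := by
        intro x y hxy
        match x, y with
        | some p, some q =>
          have hpq : p ≠ q := hxy
          exact fun h => hpq (emb_inj v (by simpa using h))
        | some p, none =>
          have hp : p ∈ A' := hxy
          simp only [hA', Finset.mem_filter] at hp
          exact Finset.mem_of_mem_erase (hBsub hp.2)
        | none, some q =>
          have hq : q ∈ A' := hxy
          simp only [hA', Finset.mem_filter] at hq
          exact Finset.mem_of_mem_erase (hBsub hq.2)
        | none, none => exact hxy.elim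
      have hnei : ∀ x y, OAdj A' x y → g (Φ x) (Φ y) ≠ i := by
        intro x y hxy
        match x, y with
        | some p, some q =>
          have hpq : p ≠ q := hxy
          exact hpriv (emb v p) (emb v q) (emb_ne v p) (emb_ne v q)
            (fun h => hpq (emb_inj v h))
        | some p, none =>
          have hp : p ∈ A' := hxy
          simp only [hA', Finset.mem_filter] at hp
          exact hpend (emb v p) (Finset.mem_of_mem_erase (hBsub hp.2)) (emb_ne v p)
        | none, some q =>
          have hq : q ∈ A' := hxy
          simp only [hA', Finset.mem_filter] at hq
          rw [hsymm]
          exact hpend (emb v q) (Finset.mem_of_mem_erase (hBsub hq.2)) (emb_ne v q)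
        | none, none => exact hxy.elim
      have hR' : ¬ RainbowTri Full (fun a b => g' (some a) (some b)) := by
        rintro ⟨x, y, z, hxy, hxz, hyz, d1, d2, d3⟩
        refine hR ⟨emb v x, emb v y, emb v z,
          fun h => hxy (emb_inj v h), fun h => hxz (emb_inj v h), fun h => hyz (emb_inj v h),
          fun h => d1 (congrArg (rho i) h), fun h => d2 (congrArg (rho i) h),
          fun h => d3 (congrArg (rho i) h)⟩
      have hP' : ¬ MonoP4 Full (fun a b => g' (some a) (some b)) := by
        rintro ⟨x, y, z, w, n1, n2, n3, n4, n5, n6, a1, a2, a3, e1, e2⟩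
        have hne : ∀ p q : Fin (n+1+2), p ≠ q → g (some (emb v p)) (some (emb v q)) ≠ i :=
          fun p q hpq => hpriv _ _ (emb_ne v p) (emb_ne v q) (fun h => hpq (emb_inj v h))
        refine hP ⟨emb v x, emb v y, emb v z, emb v w,
          fun h => n1 (emb_inj v h), fun h => n2 (emb_inj v h), fun h => n3 (emb_inj v h),
          fun h => n4 (emb_inj v h), fun h => n5 (emb_inj v h), fun h => n6 (emb_inj v h),
          fun h => a1 (emb_inj v h), fun h => a2 (emb_inj v h), fun h => a3 (emb_inj v h),
          rho_inj i _ _ (hne x y a1) (hne y z a2) e1,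
          rho_inj i _ _ (hne y z a2) (hne z w a3) e2⟩
      rcases IH A' hA'card g' (fun a b => by simp only [hg']; rw [hsymm]) hR' hP' with hcase | hcase
      · obtain ⟨a, b, d, ha1, ha2, ha3, d1, d2, d3⟩ := hcase
        exact Or.inl ⟨Φ a, Φ b, Φ d, hadj _ _ ha1, hadj _ _ ha2, hadj _ _ ha3,
          fun h => d1 (congrArg (rho i) h), fun h => d2 (congrArg (rho i) h),
          fun h => d3 (congrArg (rho i) h)⟩
      · obtain ⟨a, b, d, e, n1, n2, n3, n4, n5, n6, a1, a2, a3, e1, e2⟩ := hcase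
        have hΦinj : Function.Injective Φ := Option.map_injective (emb_inj v)
        exact Or.inr ⟨Φ a, Φ b, Φ d, Φ e,
          fun h => n1 (hΦinj h), fun h => n2 (hΦinj h), fun h => n3 (hΦinj h),
          fun h => n4 (hΦinj h), fun h => n5 (hΦinj h), fun h => n6 (hΦinj h),
          hadj _ _ a1, hadj _ _ a2, hadj _ _ a3,
          rho_inj i _ _ (hnei _ _ a1) (hnei _ _ a2) e1,
          rho_inj i _ _ (hnei _ _ a2) (hnei _ _ a3) e2⟩


set_option maxHeartbeats 1000000 in
lemma lower (k : ℕ) (hk : 1 ≤ k) :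
    ∃ A : Finset (Fin (k + 2)), A.card = k - 1 ∧
      ∃ g : Option (Fin (k + 2)) → Option (Fin (k + 2)) → Fin k,
        (∀ a b, g a b = g b a) ∧
        ¬ RainbowTri (OAdj A) g ∧ ¬ MonoP4 (OAdj A) g := by
  classical
  refine ⟨Finset.univ.filter (fun j : Fin (k+2) => 3 ≤ j.val), ?_,
    fun a b => (⟨min (max (mval a) (mval b) - 2) (k-1), by omega⟩ : Fin k), ?_, ?_, ?_⟩
  · -- cardinality
    refine Finset.card_nbij' (fun j => j.val - 3)
      (fun m => if h : m + 3 < k + 2 then (⟨m + 3, h⟩ : Fin (k+2)) else 0) ?_ ?_ ?_ ?_ |>.trans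
        (Finset.card_range (k-1))
    · intro a ha
      simp only [Finset.mem_coe, Finset.mem_filter, Finset.mem_univ, true_and] at ha
      have := a.isLt
      simp only [Finset.mem_coe, Finset.mem_range]
      omega
    · intro m hm
      simp only [Finset.mem_coe, Finset.mem_range] at hm
      simp only [Finset.mem_coe, Finset.mem_filter, Finset.mem_univ, true_and]
      rw [dif_pos (by omega)]
      simp only [Fin.val_mk]
      omega
    · intro a ha
      simp only [Finset.mem_coe, Finset.mem_filter, Finset.mem_univ, true_and] at ha
      have := a.isLt
      simp only
      rw [dif_pos (by omega)]
      apply Fin.ext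
      simp only [Fin.val_mk]
      omega
    · intro m hm
      simp only [Finset.mem_coe, Finset.mem_range] at hm
      simp only
      rw [dif_pos (by omega)]
      simp only [Fin.val_mk]
      omega
  · intro a b
    apply Fin.ext
    simp only [Fin.val_mk]
    omega
  · rintro ⟨a, b, d, -, -, -, n1, n2, n3⟩
    have R1 : min (max (mval a) (mval b) - 2) (k-1) ≠ min (max (mval a) (mval d) - 2) (k-1) :=
      fun h => n1 (Fin.ext h)
    have R2 : min (max (mval a) (mval b) - 2) (k-1) ≠ min (max (mval b) (mval d) - 2) (k-1) :=
      fun h => n2 (Fin.ext h)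
    have R3 : min (max (mval a) (mval d) - 2) (k-1) ≠ min (max (mval b) (mval d) - 2) (k-1) :=
      fun h => n3 (Fin.ext h)
    omega
  · rintro ⟨a, b, d, e, n1, n2, n3, n4, n5, n6, a1, a2, a3, q1, q2⟩
    have Q1 : min (max (mval a) (mval b) - 2) (k-1) = min (max (mval b) (mval d) - 2) (k-1) :=
      congrArg Fin.val q1
    have Q2 : min (max (mval b) (mval d) - 2) (k-1) = min (max (mval d) (mval e) - 2) (k-1) :=
      congrArg Fin.val q2
    rcases a with _|a <;> rcases b with _|b <;> rcases d with _|d <;> rcases e with _|e <;>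
      simp only [OAdj, mval_none, mval_some, ne_eq, Option.some.injEq, Finset.mem_filter,
        Finset.mem_univ, true_and, not_false_eq_true, Fin.ext_iff,
        reduceCtorEq, not_true_eq_false] at n1 n2 n3 n4 n5 n6 a1 a2 a3 Q1 Q2 <;>
      omega


theorem stmt11 (k : ℕ) (hk : 1 ≤ k) :
    (∀ A : Finset (Fin (k + 2)), A.card = k →
      ∀ g : Option (Fin (k + 2)) → Option (Fin (k + 2)) → Fin k,
        (∀ a b, g a b = g b a) →
        ¬ RainbowTri (Full (V := Fin (k + 2))) (fun a b => g (some a) (some b)) →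
        ¬ MonoP4 (Full (V := Fin (k + 2))) (fun a b => g (some a) (some b)) →
        RainbowTri (OAdj A) g ∨ MonoP4 (OAdj A) g) ∧
    (∃ A : Finset (Fin (k + 2)), A.card = k - 1 ∧
      ∃ g : Option (Fin (k + 2)) → Option (Fin (k + 2)) → Fin k,
        (∀ a b, g a b = g b a) ∧
        ¬ RainbowTri (OAdj A) g ∧ ¬ MonoP4 (OAdj A) g) := by
  obtain ⟨m, rfl⟩ : ∃ m, k = m + 1 := ⟨k - 1, by omega⟩
  exact ⟨extAux m, lower (m + 1) hk⟩
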